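/- Let n ≥ 1, 0 < β ≤ 1, 0 < α₁ ≤ α₂, and ε ≥ 0. Let Φ: ℝⁿ → ℝⁿ be continuously differentiable and let M be a continuous map from ℝⁿ to the n×n real symmetric matrices with α₁‖v‖² ≤ vᵀ M(x) v ≤ α₂‖v‖² for all x, v, and DΦ(x)ᵀ M(Φ(x)) DΦ(x) ⪯ (1−β) M(x) for all x. Let (x_k) and (y_k) be sequences in ℝⁿ with x_{k+1} = Φ(x_k) + w_k where ‖w_k‖ ≤ ε for all k, and y_{k+1} = Φ(y_k). Then for every k ∈ ℕ the Riemannian distance satisfies d_M(x_k, y_k) ≤ (1−β)^{k/2} · d_M(x_0, y_0) + √α₂ · ε · (1 − (1−β)^{k/2})/(1 − √(1−β)) when β < 1, and d_M(x_k,y_k) ≤ (1−β)^{k/2} d_M(x_0,y_0) + √α₂·ε when β = 1 and k ≥ 1. -/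

import Mathlib

open Matrix

/-- The Euclidean norm of a vector in `ℝⁿ`. -/
noncomputable def euclNorm {n : ℕ} (v : Fin n → ℝ) : ℝ :=
  Real.sqrt (v ⬝ᵥ v)

/-- The `M`-length of a path `c`: `ℓ_M(c) = ∫₀¹ √(c′(s)ᵀ M(c(s)) c′(s)) ds`. -/
noncomputable def pathLength {n : ℕ} (M : (Fin n → ℝ) → Matrix (Fin n) (Fin n) ℝ)
    (c : ℝ → Fin n → ℝ) : ℝ :=
  ∫ s in (0 : ℝ)..1, Real.sqrt (deriv c s ⬝ᵥ (M (c s)).mulVec (deriv c s))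

/-- A piecewise-C¹ path on `[0,1]`: continuous, and C¹ on each piece of some
finite partition `0 = t₀ < t₁ < ⋯ < t_m = 1`. -/
def IsPiecewiseC1 {n : ℕ} (c : ℝ → Fin n → ℝ) : Prop :=
  ContinuousOn c (Set.Icc 0 1) ∧
    ∃ (m : ℕ) (t : Fin (m + 1) → ℝ), StrictMono t ∧ t 0 = 0 ∧ t (Fin.last m) = 1 ∧
      ∀ i : Fin m, ContDiffOn ℝ 1 c (Set.Icc (t i.castSucc) (t i.succ))

/-- The Riemannian distance `d_M(x,y)`: the infimum of `ℓ_M(c)` over piecewise-C¹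
paths `c` with `c 0 = x` and `c 1 = y`. -/
noncomputable def riemannianDist {n : ℕ} (M : (Fin n → ℝ) → Matrix (Fin n) (Fin n) ℝ)
    (x y : Fin n → ℝ) : ℝ :=
  sInf {L | ∃ c : ℝ → Fin n → ℝ, IsPiecewiseC1 c ∧ c 0 = x ∧ c 1 = y ∧ pathLength M c = L}

open MeasureTheory intervalIntegral Set

namespace Step12Aux

lemma dot_self_nonneg {n : ℕ} (v : Fin n → ℝ) : 0 ≤ v ⬝ᵥ v :=
  Finset.sum_nonneg fun i _ => mul_self_nonneg _

lemma euclNorm_nonneg {n : ℕ} (v : Fin n → ℝ) : 0 ≤ euclNorm v := Real.sqrt_nonneg _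

lemma euclNorm_sq {n : ℕ} (v : Fin n → ℝ) : euclNorm v ^ 2 = v ⬝ᵥ v := by
  rw [euclNorm, Real.sq_sqrt (dot_self_nonneg v)]

lemma euclNorm_smul {n : ℕ} (a : ℝ) (v : Fin n → ℝ) :
    euclNorm (a • v) = |a| * euclNorm v := by
  rw [euclNorm, euclNorm, smul_dotProduct, dotProduct_smul, smul_eq_mul, smul_eq_mul,
    ← mul_assoc, Real.sqrt_mul (mul_self_nonneg a), Real.sqrt_mul_self_eq_abs]

/-- upper bound on the sqrt of the quadratic form -/
lemma sqrt_form_le {n : ℕ} (A : Matrix (Fin n) (Fin n) ℝ) {α₂ : ℝ} (hα : 0 ≤ α₂)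
    (v : Fin n → ℝ) (h : v ⬝ᵥ A *ᵥ v ≤ α₂ * euclNorm v ^ 2) :
    Real.sqrt (v ⬝ᵥ A *ᵥ v) ≤ Real.sqrt α₂ * euclNorm v := by
  calc Real.sqrt (v ⬝ᵥ A *ᵥ v) ≤ Real.sqrt (α₂ * euclNorm v ^ 2) := Real.sqrt_le_sqrt h
    _ = Real.sqrt α₂ * euclNorm v := by
        rw [Real.sqrt_mul hα, Real.sqrt_sq (euclNorm_nonneg v)]

/-- smul inside the quadratic form -/
lemma form_smul {n : ℕ} (A : Matrix (Fin n) (Fin n) ℝ) (a : ℝ) (v : Fin n → ℝ) :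
    (a • v) ⬝ᵥ A *ᵥ (a • v) = a ^ 2 * (v ⬝ᵥ A *ᵥ v) := by
  rw [smul_dotProduct, mulVec_smul, dotProduct_smul, smul_eq_mul, smul_eq_mul]
  ring

lemma sqrt_form_smul {n : ℕ} (A : Matrix (Fin n) (Fin n) ℝ) (a : ℝ) (v : Fin n → ℝ) :
    Real.sqrt ((a • v) ⬝ᵥ A *ᵥ (a • v)) = |a| * Real.sqrt (v ⬝ᵥ A *ᵥ v) := by
  rw [form_smul, sq_abs a |>.symm, Real.sqrt_mul (sq_nonneg _), Real.sqrt_sq (abs_nonneg a)]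


/-- contraction of the sqrt form through `Φ` -/
lemma sqrt_form_contract {n : ℕ} {β : ℝ} (hβ1 : β ≤ 1)
    (Φ : (Fin n → ℝ) → Fin n → ℝ) (J M : (Fin n → ℝ) → Matrix (Fin n) (Fin n) ℝ)
    (hcontr : ∀ x, ((1 - β) • M x - (J x)ᵀ * M (Φ x) * J x).PosSemidef)
    (x v : Fin n → ℝ) :
    Real.sqrt ((J x *ᵥ v) ⬝ᵥ M (Φ x) *ᵥ (J x *ᵥ v)) ≤
      Real.sqrt (1 - β) * Real.sqrt (v ⬝ᵥ M x *ᵥ v) := by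
  have h0 := (hcontr x).dotProduct_mulVec_nonneg v
  simp only [star_trivial] at h0
  have key : v ⬝ᵥ ((J x)ᵀ * M (Φ x) * J x) *ᵥ v
      = (J x *ᵥ v) ⬝ᵥ M (Φ x) *ᵥ (J x *ᵥ v) := by
    rw [← mulVec_mulVec, ← mulVec_mulVec, dotProduct_mulVec v, vecMul_transpose]
  rw [sub_mulVec, dotProduct_sub, smul_mulVec, dotProduct_smul, smul_eq_mul, key] at h0
  have h1 : (J x *ᵥ v) ⬝ᵥ M (Φ x) *ᵥ (J x *ᵥ v) ≤ (1 - β) * (v ⬝ᵥ M x *ᵥ v) := by linarith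
  calc Real.sqrt ((J x *ᵥ v) ⬝ᵥ M (Φ x) *ᵥ (J x *ᵥ v))
      ≤ Real.sqrt ((1 - β) * (v ⬝ᵥ M x *ᵥ v)) := Real.sqrt_le_sqrt h1
    _ = Real.sqrt (1 - β) * Real.sqrt (v ⬝ᵥ M x *ᵥ v) := Real.sqrt_mul (by linarith) _

section Integrand

variable {n : ℕ} (M : (Fin n → ℝ) → Matrix (Fin n) (Fin n) ℝ)

/-- the integrand in the path length -/
noncomputable def F (c : ℝ → Fin n → ℝ) (s : ℝ) : ℝ :=
  Real.sqrt (deriv c s ⬝ᵥ (M (c s)).mulVec (deriv c s))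

lemma pathLength_eq (c : ℝ → Fin n → ℝ) : pathLength M c = ∫ s in (0:ℝ)..1, F M c s := rfl

lemma F_nonneg (c : ℝ → Fin n → ℝ) (s : ℝ) : 0 ≤ F M c s := Real.sqrt_nonneg _

lemma form_continuousOn (hMcont : Continuous M) {s : Set ℝ} {c d : ℝ → Fin n → ℝ}
    (hc : ContinuousOn c s) (hd : ContinuousOn d s) :
    ContinuousOn (fun u => Real.sqrt (d u ⬝ᵥ (M (c u)).mulVec (d u))) s := by
  apply Real.continuous_sqrt.comp_continuousOn
  simp only [Matrix.mulVec, dotProduct]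
  apply continuousOn_finset_sum
  intro i _
  apply ContinuousOn.mul ((continuous_apply i).comp_continuousOn hd)
  apply continuousOn_finset_sum
  intro j _
  refine ContinuousOn.mul ?_ ((continuous_apply j).comp_continuousOn hd)
  exact ((continuous_apply j).comp ((continuous_apply i).comp hMcont)).comp_continuousOn hc

lemma integrable_piece (hMcont : Continuous M) {c : ℝ → Fin n → ℝ} {p q : ℝ} (hpq : p ≤ q)
    (hc : ContDiffOn ℝ 1 c (Icc p q)) : IntervalIntegrable (F M c) volume p q := by
  rcases eq_or_lt_of_le hpq with rfl | hlt
  · exact IntervalIntegrable.refl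
  have hud : UniqueDiffOn ℝ (Icc p q) := uniqueDiffOn_Icc hlt
  set d := derivWithin c (Icc p q) with hd
  have hdcont : ContinuousOn d (Icc p q) := hc.continuousOn_derivWithin hud le_rfl
  have hgint : IntervalIntegrable (fun u => Real.sqrt (d u ⬝ᵥ (M (c u)).mulVec (d u)))
      volume p q := by
    apply ContinuousOn.intervalIntegrable
    rw [uIcc_of_le hpq]
    exact form_continuousOn M hMcont hc.continuousOn hdcont
  apply hgint.congr_ae
  rw [uIoc_of_le hpq]
  have h1 : ∀ᵐ s ∂(volume.restrict (Set.Ioc p q)), s ∈ Set.Ioo p q := by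
    rw [MeasureTheory.ae_restrict_iff' measurableSet_Ioc]
    filter_upwards [MeasureTheory.Ioo_ae_eq_Ioc (μ := volume) (a := p) (b := q)] with s hs hmem
    exact hs.mpr hmem
  filter_upwards [h1] with s hs
  have : derivWithin c (Icc p q) s = deriv c s :=
    derivWithin_of_mem_nhds (Icc_mem_nhds hs.1 hs.2)
  simp only [F, hd, this]

lemma integrable_of_piecewise (hMcont : Continuous M) {c : ℝ → Fin n → ℝ} (hc : IsPiecewiseC1 c) :
    IntervalIntegrable (F M c) volume 0 1 := by
  obtain ⟨hcont, m, t, hmono, ht0, htl, hpieces⟩ := hc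
  have key : ∀ j : Fin (m + 1), IntervalIntegrable (F M c) volume (t 0) (t j) := by
    intro j
    induction j using Fin.induction with
    | zero => exact IntervalIntegrable.refl
    | succ i ih =>
        exact ih.trans (integrable_piece M hMcont (hmono.monotone
          (Fin.castSucc_lt_succ (i := i)).le |>.trans_eq rfl) (hpieces i))
  have := key (Fin.last m)
  rwa [ht0, htl] at this

end Integrand

/-- locate a point in an open piece of the partition -/
lemma exists_piece {m : ℕ} {t : Fin (m + 1) → ℝ} (hmono : StrictMono t)
    (ht0 : t 0 = 0) (htl : t (Fin.last m) = 1) {u : ℝ} (hu0 : 0 < u) (hu1 : u < 1)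
    (hur : u ∉ Set.range t) :
    ∃ i : Fin m, u ∈ Set.Ioo (t i.castSucc) (t i.succ) := by
  classical
  set Sf := Finset.univ.filter (fun i : Fin (m + 1) => t i < u) with hSf
  have hne : Sf.Nonempty := ⟨0, by simp [hSf, ht0, hu0]⟩
  set i := Sf.max' hne with hidef
  have hi : t i < u := (Finset.mem_filter.mp (Sf.max'_mem hne)).2
  have hilt : (i : ℕ) < m := by
    rcases lt_or_eq_of_le (Nat.lt_succ_iff.mp i.isLt) with h | h
    · exact h
    · exfalso
      have : i = Fin.last m := Fin.ext h
      rw [this, htl] at hi; linarith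
  refine ⟨⟨i, hilt⟩, ?_, ?_⟩
  · have : Fin.castSucc ⟨(i : ℕ), hilt⟩ = i := by ext; simp
    rw [this]; exact hi
  · set j : Fin (m + 1) := Fin.succ ⟨(i : ℕ), hilt⟩ with hj
    have hij : i < j := by
      rw [hj]; rw [Fin.lt_def]; simp
    have hnotlt : ¬ t j < u := by
      intro h
      have hjS : j ∈ Sf := by simp [hSf, h]
      have := Sf.le_max' j hjS
      rw [← hidef] at this
      exact absurd hij (not_lt.mpr this)
    have hne2 : t j ≠ u := fun h => hur ⟨j, h⟩
    exact lt_of_le_of_ne (not_lt.mp hnotlt) (Ne.symm hne2)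

section Line

variable {n : ℕ} (M : (Fin n → ℝ) → Matrix (Fin n) (Fin n) ℝ)

lemma line_isPiecewiseC1 (a b : Fin n → ℝ) :
    IsPiecewiseC1 (fun s : ℝ => a + s • (b - a)) := by
  constructor
  · exact (continuous_const.add (continuous_id.smul continuous_const)).continuousOn
  refine ⟨1, ![0, 1], ?_, by simp, by simp [Fin.last], ?_⟩
  · rw [Fin.strictMono_iff_lt_succ]
    intro i
    fin_cases i
    norm_num
  · intro i
    exact (contDiff_const.add (contDiff_id.smul contDiff_const)).contDiffOn

lemma distSet_nonempty (x y : Fin n → ℝ) :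
    {L | ∃ c : ℝ → Fin n → ℝ, IsPiecewiseC1 c ∧ c 0 = x ∧ c 1 = y ∧
      pathLength M c = L}.Nonempty := by
  refine ⟨pathLength M (fun s : ℝ => x + s • (y - x)), (fun s : ℝ => x + s • (y - x)),
    line_isPiecewiseC1 x y, by simp, by simp, rfl⟩

lemma distSet_bddBelow (x y : Fin n → ℝ) :
    BddBelow {L | ∃ c : ℝ → Fin n → ℝ, IsPiecewiseC1 c ∧ c 0 = x ∧ c 1 = y ∧
      pathLength M c = L} := by
  refine ⟨0, fun L hL => ?_⟩
  obtain ⟨c, _, _, _, rfl⟩ := hL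
  exact intervalIntegral.integral_nonneg (by norm_num) (fun s _ => Real.sqrt_nonneg _)

lemma riemannianDist_le {x y : Fin n → ℝ} {c : ℝ → Fin n → ℝ}
    (hc : IsPiecewiseC1 c) (h0 : c 0 = x) (h1 : c 1 = y) :
    riemannianDist M x y ≤ pathLength M c :=
  csInf_le (distSet_bddBelow M x y) ⟨c, hc, h0, h1, rfl⟩

end Line

section Step

variable {n : ℕ} {β α₂ : ℝ}
  {Φ : (Fin n → ℝ) → Fin n → ℝ} {J M : (Fin n → ℝ) → Matrix (Fin n) (Fin n) ℝ}

/-- the perturbed-concatenated path -/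
noncomputable def ctil (Φ : (Fin n → ℝ) → Fin n → ℝ) (c : ℝ → Fin n → ℝ)
    (wv : Fin n → ℝ) : ℝ → Fin n → ℝ :=
  fun s => Φ (c (max 0 (2 * s - 1))) + (1 - min 1 (2 * s)) • wv

lemma ctil_zero (c : ℝ → Fin n → ℝ) (wv : Fin n → ℝ) :
    ctil Φ c wv 0 = Φ (c 0) + wv := by
  simp [ctil]

lemma ctil_one (c : ℝ → Fin n → ℝ) (wv : Fin n → ℝ) :
    ctil Φ c wv 1 = Φ (c 1) := by
  norm_num [ctil]

lemma ctil_spec (hβ1 : β ≤ 1) (hα2 : 0 ≤ α₂)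
    (hΦ : ContDiff ℝ 1 Φ)
    (hJ : ∀ x, HasFDerivAt Φ (J x).mulVecLin.toContinuousLinearMap x)
    (hMcont : Continuous M)
    (hMub : ∀ x (v : Fin n → ℝ), v ⬝ᵥ (M x).mulVec v ≤ α₂ * (euclNorm v) ^ 2)
    (hcontr : ∀ x, ((1 - β) • M x - (J x)ᵀ * M (Φ x) * J x).PosSemidef)
    (c : ℝ → Fin n → ℝ) (hc : IsPiecewiseC1 c) (wv : Fin n → ℝ) :
    IsPiecewiseC1 (ctil Φ c wv) ∧
      pathLength M (ctil Φ c wv) ≤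
        Real.sqrt (1 - β) * pathLength M c + Real.sqrt α₂ * euclNorm wv := by
  obtain ⟨hcont, m, t, hmono, ht0, htl, hpieces⟩ := hc
  have ht_nonneg : ∀ i, (0:ℝ) ≤ t i := fun i => ht0 ▸ hmono.monotone (Fin.zero_le i)
  have ht_le_one : ∀ i, t i ≤ 1 := fun i => htl ▸ hmono.monotone (Fin.le_last i)
  have hA : IsPiecewiseC1 (ctil Φ c wv) := by
    constructor
    · have hmax : Continuous fun s : ℝ => max 0 (2 * s - 1) :=
        continuous_const.max ((continuous_const.mul continuous_id).sub continuous_const)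
      have hmaps : MapsTo (fun s : ℝ => max 0 (2 * s - 1)) (Icc 0 1) (Icc 0 1) := by
        intro s hs
        obtain ⟨hs0, hs1⟩ := hs
        exact ⟨le_max_left _ _, max_le (by norm_num) (by linarith)⟩
      apply ContinuousOn.add
      · exact hΦ.continuous.comp_continuousOn (hcont.comp hmax.continuousOn hmaps)
      · exact ContinuousOn.smul
          ((continuous_const.sub (continuous_const.min
            (continuous_const.mul continuous_id))).continuousOn) continuousOn_const
    · refine ⟨m + 1, Fin.cons 0 (fun i => (1 + t i) / 2), ?_, by simp, ?_, ?_⟩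
      · rw [Fin.strictMono_iff_lt_succ]
        intro i
        induction i using Fin.cases with
        | zero =>
            have e1 : (Fin.cons (0:ℝ) (fun i => (1 + t i) / 2) : Fin (m + 2) → ℝ)
                ((0 : Fin (m+1)).castSucc) = 0 := by simp
            have e2 : (Fin.cons (0:ℝ) (fun i => (1 + t i) / 2) : Fin (m + 2) → ℝ)
                ((0 : Fin (m+1)).succ) = (1 + t 0) / 2 := by simp
            rw [e1, e2, ht0]; norm_num
        | succ j =>
            have e1 : (Fin.cons (0:ℝ) (fun i => (1 + t i) / 2) : Fin (m + 2) → ℝ)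
                ((j.succ).castSucc) = (1 + t j.castSucc) / 2 := by
              rw [← Fin.succ_castSucc]; simp
            have e2 : (Fin.cons (0:ℝ) (fun i => (1 + t i) / 2) : Fin (m + 2) → ℝ)
                ((j.succ).succ) = (1 + t j.succ) / 2 := by simp
            rw [e1, e2]
            have := hmono (Fin.castSucc_lt_succ (i := j))
            linarith
      · rw [← Fin.succ_last, Fin.cons_succ, htl]
        norm_num
      · intro i
        induction i using Fin.cases with
        | zero =>
            have e1 : (Fin.cons (0:ℝ) (fun i => (1 + t i) / 2) : Fin (m + 2) → ℝ)
                ((0 : Fin (m + 1)).castSucc) = 0 := by simp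
            have e2 : (Fin.cons (0:ℝ) (fun i => (1 + t i) / 2) : Fin (m + 2) → ℝ)
                ((0 : Fin (m + 1)).succ) = 1 / 2 := by
              rw [show ((0 : Fin (m + 1)).succ) = Fin.succ 0 from rfl, Fin.cons_succ, ht0]
              norm_num
            rw [e1, e2]
            refine ContDiffOn.congr
              (f := fun s : ℝ => Φ (c 0) + (1 - 2*s) • wv) (ContDiff.contDiffOn ?_) ?_
            · exact contDiff_const.add
                ((contDiff_const.sub (contDiff_const.mul contDiff_id)).smul contDiff_const)
            · intro s hs
              obtain ⟨hs0, hs1⟩ := hs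
              have h1 : max 0 (2 * s - 1) = 0 := max_eq_left (by linarith)
              have h2 : min 1 (2 * s) = 2 * s := min_eq_right (by linarith)
              simp [ctil, h1, h2]
        | succ j =>
            have e1 : (Fin.cons (0:ℝ) (fun i => (1 + t i) / 2) : Fin (m + 2) → ℝ)
                ((j.succ).castSucc) = (1 + t j.castSucc) / 2 := by
              rw [← Fin.succ_castSucc]; simp
            have e2 : (Fin.cons (0:ℝ) (fun i => (1 + t i) / 2) : Fin (m + 2) → ℝ)
                ((j.succ).succ) = (1 + t j.succ) / 2 := by simp
            rw [e1, e2]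
            refine ContDiffOn.congr
              (f := fun s : ℝ => Φ (c (2 * s - 1))) ?_ ?_
            · refine hΦ.comp_contDiffOn
                (((hpieces j).comp
                  (((contDiff_const.mul contDiff_id).sub contDiff_const).contDiffOn) ?_))
              intro s hs
              obtain ⟨hs0, hs1⟩ := hs
              constructor
              · show t j.castSucc ≤ 2 * s - 1
                linarith
              · show 2 * s - 1 ≤ t j.succ
                linarith
            · intro s hs
              obtain ⟨hs0, hs1⟩ := hs
              have h0c : (0:ℝ) ≤ t j.castSucc := ht_nonneg _
              have h1 : max 0 (2 * s - 1) = 2 * s - 1 := max_eq_right (by linarith)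
              have h2 : min 1 (2 * s) = 1 := min_eq_left (by linarith)
              simp [ctil, h1, h2]
  refine ⟨hA, ?_⟩
  have hint_c : IntervalIntegrable (F M c) volume 0 1 :=
    integrable_of_piecewise M hMcont ⟨hcont, m, t, hmono, ht0, htl, hpieces⟩
  have hint_ct : IntervalIntegrable (F M (ctil Φ c wv)) volume 0 1 :=
    integrable_of_piecewise M hMcont hA
  have hsub1 : Set.uIcc (0:ℝ) (1/2) ⊆ Set.uIcc (0:ℝ) 1 := by
    rw [uIcc_of_le (by norm_num : (0:ℝ) ≤ 1/2), uIcc_of_le (by norm_num : (0:ℝ) ≤ 1)]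
    exact Icc_subset_Icc le_rfl (by norm_num)
  have hsub2 : Set.uIcc (1/2:ℝ) 1 ⊆ Set.uIcc (0:ℝ) 1 := by
    rw [uIcc_of_le (by norm_num : (1/2:ℝ) ≤ 1), uIcc_of_le (by norm_num : (0:ℝ) ≤ 1)]
    exact Icc_subset_Icc (by norm_num) le_rfl
  have hint1 : IntervalIntegrable (F M (ctil Φ c wv)) volume 0 (1/2) := hint_ct.mono_set hsub1
  have hint2 : IntervalIntegrable (F M (ctil Φ c wv)) volume (1/2) 1 := hint_ct.mono_set hsub2
  have hsplit : pathLength M (ctil Φ c wv) =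
      (∫ s in (0:ℝ)..(1/2), F M (ctil Φ c wv) s) + ∫ s in (1/2:ℝ)..1, F M (ctil Φ c wv) s := by
    rw [pathLength_eq]
    exact (integral_add_adjacent_intervals hint1 hint2).symm
  have hb1 : (∫ s in (0:ℝ)..(1/2), F M (ctil Φ c wv) s) ≤ Real.sqrt α₂ * euclNorm wv := by
    have hae : ∀ᵐ s ∂(volume.restrict (Icc (0:ℝ) (1/2))),
        F M (ctil Φ c wv) s ≤ 2 * (Real.sqrt α₂ * euclNorm wv) := by
      rw [MeasureTheory.ae_restrict_iff' measurableSet_Icc]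
      have hnull : volume ({0, 1/2} : Set ℝ) = 0 :=
        Set.Finite.measure_zero (Set.toFinite _) _
      filter_upwards [measure_eq_zero_iff_ae_notMem.mp hnull] with s hs hmem
      simp only [Set.mem_insert_iff, Set.mem_singleton_iff, not_or] at hs
      have hs0 : 0 < s := lt_of_le_of_ne hmem.1 (Ne.symm hs.1)
      have hs1 : s < 1/2 := lt_of_le_of_ne hmem.2 hs.2
      have hev : ctil Φ c wv =ᶠ[nhds s] (fun u : ℝ => Φ (c 0) + (1 - 2*u) • wv) := by
        filter_upwards [Iio_mem_nhds hs1] with u hu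
        rw [Set.mem_Iio] at hu
        have h1 : max 0 (2 * u - 1) = 0 := max_eq_left (by linarith)
        have h2 : min 1 (2 * u) = 2 * u := min_eq_right (by linarith)
        simp [ctil, h1, h2]
      have hder : HasDerivAt (fun u : ℝ => Φ (c 0) + (1 - 2*u) • wv) ((-2 : ℝ) • wv) s := by
        have h2 : HasDerivAt (fun u : ℝ => 1 - 2*u) (-2) s := by
          simpa using ((hasDerivAt_id s).const_mul (2:ℝ)).const_sub 1
        exact (h2.smul_const wv).const_add (Φ (c 0))
      have hde : deriv (ctil Φ c wv) s = (-2 : ℝ) • wv := by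
        rw [hev.deriv_eq]; exact hder.deriv
      rw [F, hde]
      rw [sqrt_form_smul]
      have := sqrt_form_le (M (ctil Φ c wv s)) hα2 wv (hMub _ wv)
      have habs : |(-2 : ℝ)| = 2 := by norm_num
      rw [habs]
      nlinarith [Real.sqrt_nonneg (wv ⬝ᵥ (M (ctil Φ c wv s)) *ᵥ wv)]
    calc (∫ s in (0:ℝ)..(1/2), F M (ctil Φ c wv) s)
        ≤ ∫ _ in (0:ℝ)..(1/2), (2 * (Real.sqrt α₂ * euclNorm wv)) :=
          integral_mono_ae_restrict (by norm_num) hint1 intervalIntegrable_const hae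
      _ = Real.sqrt α₂ * euclNorm wv := by
          rw [intervalIntegral.integral_const, smul_eq_mul]; ring
  set g : ℝ → ℝ := fun s => (2 * Real.sqrt (1 - β)) * F M c (2*s - 1) with hg
  have hgint : IntervalIntegrable g volume (1/2) 1 := by
    have h1 : IntervalIntegrable (fun y => F M c (y - 1)) volume (0 + 1) (1 + 1) :=
      hint_c.comp_sub_right 1
    have h2 := h1.comp_mul_left (c := 2)
    norm_num at h2
    exact h2.const_mul _
  have hae2 : ∀ᵐ s ∂(volume.restrict (Icc (1/2:ℝ) 1)), F M (ctil Φ c wv) s ≤ g s := by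
    rw [MeasureTheory.ae_restrict_iff' measurableSet_Icc]
    have hE : Set.Finite ((fun u : ℝ => (1 + u)/2) '' (Set.range t) ∪ {1/2, 1}) :=
      ((Set.finite_range t).image _).union (Set.toFinite _)
    filter_upwards [measure_eq_zero_iff_ae_notMem.mp (hE.measure_zero _)] with s hs hmem
    simp only [Set.mem_union, Set.mem_insert_iff, Set.mem_singleton_iff, not_or] at hs
    obtain ⟨hsE, hs12, hs1e⟩ := hs
    have hs_l : 1/2 < s := lt_of_le_of_ne hmem.1 (Ne.symm hs12)
    have hs_r : s < 1 := lt_of_le_of_ne hmem.2 hs1e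
    have hu0 : 0 < 2*s - 1 := by linarith
    have hu1 : 2*s - 1 < 1 := by linarith
    have hur : 2*s - 1 ∉ Set.range t := by
      rintro ⟨i, hi⟩
      exact hsE ⟨t i, ⟨i, rfl⟩, by rw [hi]; ring⟩
    obtain ⟨i, hio⟩ := exists_piece hmono ht0 htl hu0 hu1 hur
    have hcd : DifferentiableAt ℝ c (2*s - 1) :=
      ((hpieces i).differentiableOn one_ne_zero).differentiableAt (Icc_mem_nhds hio.1 hio.2)
    have hder_c : HasDerivAt c (deriv c (2*s - 1)) (2*s - 1) := hcd.hasDerivAt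
    have haff : HasDerivAt (fun r : ℝ => 2*r - 1) 2 s := by
      simpa using ((hasDerivAt_id s).const_mul (2:ℝ)).sub_const 1
    have hcomp : HasDerivAt (fun r : ℝ => c (2*r - 1)) ((2:ℝ) • deriv c (2*s - 1)) s :=
      HasDerivAt.scomp s hder_c haff
    have hfull : HasDerivAt (fun r : ℝ => Φ (c (2*r - 1)))
        ((J (c (2*s - 1))).mulVec ((2:ℝ) • deriv c (2*s - 1))) s := by
      have h := (hJ (c (2*s - 1))).comp_hasDerivAt s hcomp
      simpa [Function.comp_def, Matrix.mulVec_smul] using h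
    have hev : ctil Φ c wv =ᶠ[nhds s] (fun r : ℝ => Φ (c (2*r - 1))) := by
      filter_upwards [Ioi_mem_nhds hs_l] with r hr
      rw [Set.mem_Ioi] at hr
      have h1 : max 0 (2 * r - 1) = 2 * r - 1 := max_eq_right (by linarith)
      have h2 : min 1 (2 * r) = 1 := min_eq_left (by linarith)
      simp [ctil, h1, h2]
    have hde : deriv (ctil Φ c wv) s = (J (c (2*s - 1))).mulVec ((2:ℝ) • deriv c (2*s - 1)) := by
      rw [hev.deriv_eq]; exact hfull.deriv
    have hcs : ctil Φ c wv s = Φ (c (2*s - 1)) := hev.eq_of_nhds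
    rw [F, hde, hcs, Matrix.mulVec_smul, sqrt_form_smul]
    have hc2 := sqrt_form_contract hβ1 Φ J M hcontr (c (2*s - 1)) (deriv c (2*s - 1))
    have hFval : F M c (2*s - 1) =
        Real.sqrt (deriv c (2*s - 1) ⬝ᵥ M (c (2*s - 1)) *ᵥ deriv c (2*s - 1)) := rfl
    rw [hg]
    simp only [hFval]
    have habs : |(2 : ℝ)| = 2 := by norm_num
    rw [habs]
    nlinarith [Real.sqrt_nonneg ((J (c (2*s-1)) *ᵥ deriv c (2*s-1)) ⬝ᵥ
      M (Φ (c (2*s-1))) *ᵥ (J (c (2*s-1)) *ᵥ deriv c (2*s-1)))]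
  have hb2 : (∫ s in (1/2:ℝ)..1, F M (ctil Φ c wv) s) ≤ Real.sqrt (1-β) * pathLength M c := by
    have h1 : (∫ s in (1/2:ℝ)..1, F M (ctil Φ c wv) s) ≤ ∫ s in (1/2:ℝ)..1, g s :=
      integral_mono_ae_restrict (by norm_num) hint2 hgint hae2
    have h2 : (∫ s in (1/2:ℝ)..1, g s) =
        (2 * Real.sqrt (1-β)) * ∫ s in (1/2:ℝ)..1, F M c (2*s - 1) := by
      rw [hg]; exact intervalIntegral.integral_const_mul _ _
    have h3 : (∫ s in (1/2:ℝ)..1, F M c (2*s - 1)) = 2⁻¹ * ∫ s in (0:ℝ)..1, F M c s := by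
      have key := intervalIntegral.integral_comp_mul_add (a := 1/2) (b := 1)
        (c := 2) (F M c) two_ne_zero (-1)
      have he : ∀ s : ℝ, 2 * s + (-1) = 2 * s - 1 := fun s => by ring
      simp_rw [he] at key
      rw [key]
      norm_num
    rw [pathLength_eq]
    exact h1.trans (le_of_eq (by rw [h2, h3]; ring))
  rw [hsplit]
  linarith

lemma step_bound (hβ1 : β ≤ 1) (hα2 : 0 ≤ α₂)
    (hΦ : ContDiff ℝ 1 Φ)
    (hJ : ∀ x, HasFDerivAt Φ (J x).mulVecLin.toContinuousLinearMap x)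
    (hMcont : Continuous M)
    (hMub : ∀ x (v : Fin n → ℝ), v ⬝ᵥ (M x).mulVec v ≤ α₂ * (euclNorm v) ^ 2)
    (hcontr : ∀ x, ((1 - β) • M x - (J x)ᵀ * M (Φ x) * J x).PosSemidef)
    (a b wv : Fin n → ℝ) :
    riemannianDist M (Φ a + wv) (Φ b) ≤
      Real.sqrt (1 - β) * riemannianDist M a b + Real.sqrt α₂ * euclNorm wv := by
  have hne := distSet_nonempty M a b
  have hC0 : 0 ≤ Real.sqrt α₂ * euclNorm wv :=
    mul_nonneg (Real.sqrt_nonneg _) (euclNorm_nonneg wv)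
  have key : ∀ L ∈ {L | ∃ c : ℝ → Fin n → ℝ, IsPiecewiseC1 c ∧ c 0 = a ∧ c 1 = b ∧
      pathLength M c = L},
      riemannianDist M (Φ a + wv) (Φ b) ≤
        Real.sqrt (1 - β) * L + Real.sqrt α₂ * euclNorm wv := by
    rintro L ⟨c, hc, h0, h1, rfl⟩
    obtain ⟨hA, hlen⟩ := ctil_spec hβ1 hα2 hΦ hJ hMcont hMub hcontr c hc wv
    have hd := riemannianDist_le M hA (by rw [ctil_zero, h0]) (by rw [ctil_one, h1])
    linarith
  rcases eq_or_lt_of_le (Real.sqrt_nonneg (1 - β)) with hr | hr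
  · obtain ⟨L, hL⟩ := hne
    have hkey := key L hL
    rw [← hr] at hkey ⊢
    rw [zero_mul] at hkey ⊢
    linarith
  · have hle : (riemannianDist M (Φ a + wv) (Φ b) - Real.sqrt α₂ * euclNorm wv) /
        Real.sqrt (1 - β) ≤ riemannianDist M a b := by
      show _ ≤ sInf _
      apply le_csInf hne
      intro L hL
      rw [div_le_iff₀ hr]
      have h1 := key L hL
      have h2 : Real.sqrt (1 - β) * L = L * Real.sqrt (1 - β) := mul_comm _ _
      linarith
    rw [div_le_iff₀ hr] at hle
    have h3 : riemannianDist M a b * Real.sqrt (1 - β) =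
      Real.sqrt (1 - β) * riemannianDist M a b := mul_comm _ _
    linarith

end Step

end Step12Aux

/-- Lemma 2: for a contracting C¹ map `Φ` (with Jacobian `J(x) = DΦ(x)`,
continuous uniformly bounded symmetric metric `M`, and contraction condition
`DΦ(x)ᵀ M(Φ(x)) DΦ(x) ⪯ (1-β) M(x)`), a trajectory `x_{k+1} = Φ(x_k) + w_k` perturbed by
`‖w_k‖ ≤ ε` tracks the unperturbed trajectory `y_{k+1} = Φ(y_k)` within the Riemannian
bound `d_M(x_k,y_k) ≤ (1-β)^{k/2} d_M(x_0,y_0) + √α₂ ε (1-(1-β)^{k/2})/(1-√(1-β))`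
when `β < 1`, and `d_M(x_k,y_k) ≤ (1-β)^{k/2} d_M(x_0,y_0) + √α₂ ε` when `β = 1, k ≥ 1`. -/
theorem perturbed_contraction_riemannian_tracking_bound
    (n : ℕ) (hn : 1 ≤ n) (β α₁ α₂ ε : ℝ)
    (hβ0 : 0 < β) (hβ1 : β ≤ 1) (hα₁ : 0 < α₁) (hα₁₂ : α₁ ≤ α₂) (hε : 0 ≤ ε)
    (Φ : (Fin n → ℝ) → Fin n → ℝ) (hΦ : ContDiff ℝ 1 Φ)
    (J : (Fin n → ℝ) → Matrix (Fin n) (Fin n) ℝ)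
    (hJ : ∀ x, HasFDerivAt Φ (J x).mulVecLin.toContinuousLinearMap x)
    (M : (Fin n → ℝ) → Matrix (Fin n) (Fin n) ℝ)
    (hMcont : Continuous M) (hMsym : ∀ x, (M x).IsHermitian)
    (hMlb : ∀ x (v : Fin n → ℝ), α₁ * (euclNorm v) ^ 2 ≤ v ⬝ᵥ (M x).mulVec v)
    (hMub : ∀ x (v : Fin n → ℝ), v ⬝ᵥ (M x).mulVec v ≤ α₂ * (euclNorm v) ^ 2)
    (hcontr : ∀ x, ((1 - β) • M x - (J x)ᵀ * M (Φ x) * J x).PosSemidef)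
    (x y : ℕ → Fin n → ℝ) (w : ℕ → Fin n → ℝ)
    (hx : ∀ k, x (k + 1) = Φ (x k) + w k)
    (hw : ∀ k, euclNorm (w k) ≤ ε)
    (hy : ∀ k, y (k + 1) = Φ (y k)) :
    (β < 1 → ∀ k : ℕ,
        riemannianDist M (x k) (y k) ≤
          (1 - β) ^ ((k : ℝ) / 2) * riemannianDist M (x 0) (y 0) +
            Real.sqrt α₂ * ε * (1 - (1 - β) ^ ((k : ℝ) / 2)) / (1 - Real.sqrt (1 - β))) ∧
    (β = 1 → ∀ k : ℕ, 1 ≤ k →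
        riemannianDist M (x k) (y k) ≤
          (1 - β) ^ ((k : ℝ) / 2) * riemannianDist M (x 0) (y 0) + Real.sqrt α₂ * ε) := by
  set r := Real.sqrt (1 - β) with hrdef
  have h1β : (0:ℝ) ≤ 1 - β := by linarith
  have hr0 : 0 ≤ r := Real.sqrt_nonneg _
  have hα2 : (0:ℝ) ≤ α₂ := le_trans hα₁.le hα₁₂
  have hrec : ∀ k, riemannianDist M (x (k+1)) (y (k+1)) ≤
      r * riemannianDist M (x k) (y k) + Real.sqrt α₂ * ε := by
    intro k
    rw [hx k, hy k]
    have h1 := Step12Aux.step_bound hβ1 hα2 hΦ hJ hMcont hMub hcontr (x k) (y k) (w k)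
    have h2 : Real.sqrt α₂ * euclNorm (w k) ≤ Real.sqrt α₂ * ε :=
      mul_le_mul_of_nonneg_left (hw k) (Real.sqrt_nonneg _)
    linarith
  have hpow : ∀ k : ℕ, (1 - β) ^ ((k : ℝ) / 2) = r ^ k := by
    intro k
    rw [show ((k : ℝ)/2) = (1/2 : ℝ) * (k:ℝ) by ring, Real.rpow_mul h1β,
      ← Real.sqrt_eq_rpow, Real.rpow_natCast]
  constructor
  · intro hβlt k
    have hrlt : r < 1 := by
      have h := Real.sqrt_lt_sqrt h1β (by linarith : 1 - β < 1)
      rwa [Real.sqrt_one] at h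
    have hind : ∀ k : ℕ, riemannianDist M (x k) (y k) ≤
        r ^ k * riemannianDist M (x 0) (y 0) +
          Real.sqrt α₂ * ε * (1 - r ^ k) / (1 - r) := by
      intro k
      induction k with
      | zero => simp
      | succ k ih =>
          have h1 := hrec k
          have h2 : r * riemannianDist M (x k) (y k) ≤
              r * (r ^ k * riemannianDist M (x 0) (y 0) +
                Real.sqrt α₂ * ε * (1 - r ^ k) / (1 - r)) :=
            mul_le_mul_of_nonneg_left ih hr0
          have hne : 1 - r ≠ 0 := by intro h; rw [sub_eq_zero] at h; exact hrlt.ne' h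
          have h3 : r * (r ^ k * riemannianDist M (x 0) (y 0) +
              Real.sqrt α₂ * ε * (1 - r ^ k) / (1 - r)) + Real.sqrt α₂ * ε =
              r ^ (k+1) * riemannianDist M (x 0) (y 0) +
                Real.sqrt α₂ * ε * (1 - r ^ (k+1)) / (1 - r) := by
            field_simp
            ring
          linarith
    rw [hpow k]
    exact hind k
  · intro hβe k hk
    obtain ⟨j, rfl⟩ : ∃ j, k = j + 1 := ⟨k - 1, (Nat.succ_pred_eq_of_pos hk).symm⟩
    have h1 := hrec j
    have hr0' : r = 0 := by rw [hrdef, hβe]; simp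
    have hzero : (1 - β) = 0 := by rw [hβe]; ring
    rw [hzero, Real.zero_rpow (by positivity : ((((j+1:ℕ)) : ℝ)/2) ≠ 0), zero_mul, zero_add]
    rw [hr0', zero_mul, zero_add] at h1
    exact h1
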